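/- For every graph H on k vertices (k ≥ 1), there exists a real number L with 0 ≤ L ≤ 1 such that the sequence n ↦ P(H, n)/C(n, k) converges to L as n → ∞. -/

import Mathlib

open Classical in
/-- Number of `k`-element vertex subsets of `G` whose induced subgraph is isomorphic to `H`,
where `k` is the number of vertices of `H`. -/
noncomputable def inducedCount {α β : Type*} [Fintype α] [Fintype β]
    (H : SimpleGraph α) (G : SimpleGraph β) : ℕ :=
  (Finset.univ.filter fun S : Finset β =>
    S.card = Fintype.card α ∧ Nonempty ((G.induce (S : Set β)) ≃g H)).card

/-- The maximum of `inducedCount H G` over all graphs `G` on `n` vertices. -/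
noncomputable def maxInducedCount {α : Type*} [Fintype α] (H : SimpleGraph α) (n : ℕ) : ℕ :=
  sSup {m | ∃ G : SimpleGraph (Fin n), inducedCount H G = m}

section Aux

open Finset

variable {α β : Type*} [Fintype α] [Fintype β]

lemma inducedCount_le (H : SimpleGraph α) (G : SimpleGraph β) :
    inducedCount H G ≤ (Fintype.card β).choose (Fintype.card α) := by
  classical
  rw [inducedCount]
  refine le_trans (Finset.card_le_card
      (t := Finset.univ.filter fun S : Finset β => S.card = Fintype.card α)
      (fun S hS => ?_)) ?_
  · exact Finset.mem_filter.mpr ⟨Finset.mem_univ S,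
      ((Finset.mem_filter.mp hS).2.1 : S.card = Fintype.card α)⟩
  · have : (Finset.univ.filter fun S : Finset β => S.card = Fintype.card α)
        = Finset.powersetCard (Fintype.card α) Finset.univ := by
      rw [Finset.powersetCard_eq_filter, Finset.powerset_univ]
    rw [this, Finset.card_powersetCard, Finset.card_univ]

lemma bddAbove_counts (H : SimpleGraph α) (n : ℕ) :
    BddAbove {m | ∃ G : SimpleGraph (Fin n), inducedCount H G = m} := by
  refine ⟨n.choose (Fintype.card α), fun m hm => ?_⟩
  obtain ⟨G, rfl⟩ := hm
  simpa using inducedCount_le H G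

lemma nonempty_counts (H : SimpleGraph α) (n : ℕ) :
    Set.Nonempty {m | ∃ G : SimpleGraph (Fin n), inducedCount H G = m} :=
  ⟨inducedCount H (⊥ : SimpleGraph (Fin n)), ⊥, rfl⟩

lemma maxInducedCount_le (H : SimpleGraph α) (n : ℕ) :
    maxInducedCount H n ≤ n.choose (Fintype.card α) := by
  refine csSup_le (nonempty_counts H n) (fun m hm => ?_)
  obtain ⟨G, rfl⟩ := hm
  simpa using inducedCount_le H G

lemma le_maxInducedCount (H : SimpleGraph α) {n : ℕ} (G : SimpleGraph (Fin n)) :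
    inducedCount H G ≤ maxInducedCount H n :=
  le_csSup (bddAbove_counts H n) ⟨G, rfl⟩

lemma key_ineq (H : SimpleGraph α) {n : ℕ} (hn : Fintype.card α ≤ n) :
    (n + 1 - Fintype.card α) * maxInducedCount H (n + 1)
      ≤ (n + 1) * maxInducedCount H n := by
  classical
  set k := Fintype.card α with hk
  obtain ⟨G, hG⟩ : ∃ G : SimpleGraph (Fin (n + 1)),
      inducedCount H G = maxInducedCount H (n + 1) :=
    Nat.sSup_mem (nonempty_counts H (n + 1)) (bddAbove_counts H (n + 1))
  set good : Finset (Finset (Fin (n + 1))) :=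
    Finset.univ.filter (fun S => S.card = k ∧
      Nonempty ((G.induce (S : Set (Fin (n + 1)))) ≃g H)) with hgood
  have hcount : inducedCount H G = good.card := by
    rw [inducedCount, hgood]
  -- double counting
  have hsum : ∑ v : Fin (n + 1), (good.filter (fun S => v ∉ S)).card
      = (n + 1 - k) * good.card := by
    have h1 : ∀ v : Fin (n + 1), (good.filter (fun S => v ∉ S)).card
        = ∑ S ∈ good, if v ∉ S then 1 else 0 := fun v => Finset.card_filter _ _
    simp only [h1]
    rw [Finset.sum_comm]
    have h2 : ∀ S ∈ good, (∑ v : Fin (n + 1), if v ∉ S then 1 else 0) = n + 1 - k := by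
      intro S hS
      have hcard : S.card = k := (Finset.mem_filter.mp hS).2.1
      have : (∑ v : Fin (n + 1), if v ∉ S then 1 else 0)
          = (Finset.univ.filter (fun v : Fin (n + 1) => v ∉ S)).card :=
        (Finset.card_filter _ _).symm
      rw [this]
      have : Finset.univ.filter (fun v : Fin (n + 1) => v ∉ S) = Sᶜ := by
        ext v; simp
      rw [this, Finset.card_compl, hcard]
      simp
    rw [Finset.sum_congr rfl h2, Finset.sum_const, smul_eq_mul, mul_comm]
  -- per-vertex bound
  have hv : ∀ v : Fin (n + 1),
      (good.filter (fun S => v ∉ S)).card ≤ maxInducedCount H n := by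
    intro v
    have hcard : Fintype.card {x : Fin (n + 1) // ¬ x = v} = n := by
      rw [Fintype.card_subtype_compl]
      simp
    let e : {x : Fin (n + 1) // ¬ x = v} ≃ Fin n := Fintype.equivFinOfCardEq hcard
    let g : Fin n → Fin (n + 1) := fun i => (e.symm i).1
    have hginj : Function.Injective g := fun a b hab => by
      have := e.symm.injective (Subtype.ext hab)
      exact this
    have hgne : ∀ i, g i ≠ v := fun i => (e.symm i).2
    have hgsurj : ∀ (x : Fin (n + 1)) (hx : ¬ x = v), g (e ⟨x, hx⟩) = x := by
      intro x hx
      show (e.symm (e ⟨x, hx⟩)).1 = x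
      rw [e.symm_apply_apply]
    set G' : SimpleGraph (Fin n) := G.comap g with hG'
    refine le_trans ?_ (le_maxInducedCount H G')
    rw [inducedCount]
    set f : Finset (Fin (n + 1)) → Finset (Fin n) :=
      fun S => Finset.univ.filter (fun i => g i ∈ S) with hfdef
    -- key: for S avoiding v, (f S).image g = S
    have himg : ∀ S : Finset (Fin (n + 1)), v ∉ S → (f S).image g = S := by
      intro S hvS
      ext x
      simp only [hfdef, Finset.mem_image, Finset.mem_filter, Finset.mem_univ, true_and]
      constructor
      · rintro ⟨i, hi, rfl⟩; exact hi
      · intro hx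
        have hxv : ¬ x = v := fun h => hvS (h ▸ hx)
        exact ⟨e ⟨x, hxv⟩, by rw [hgsurj x hxv]; exact hx, hgsurj x hxv⟩
    apply Finset.card_le_card_of_injOn f
    · intro S hS
      rw [Finset.mem_coe] at hS ⊢
      rw [Finset.mem_filter, hgood, Finset.mem_filter] at hS
      simp only [Finset.mem_univ, true_and] at hS
      obtain ⟨⟨hScard, ⟨φ⟩⟩, hvS⟩ := hS
      have himgS := himg S hvS
      have hfcard : (f S).card = k := by
        rw [← hScard]
        conv_rhs => rw [← himgS]
        rw [Finset.card_image_of_injective _ hginj]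
      refine Finset.mem_filter.mpr ⟨Finset.mem_univ _, hfcard, ?_⟩
      -- build iso G'.induce (f S) ≃g G.induce S
      have hmem : ∀ i : Fin n, i ∈ f S ↔ g i ∈ S := by
        intro i; simp [hfdef]
      have hyne : ∀ y : (S : Set (Fin (n + 1))), ¬ (y : Fin (n + 1)) = v :=
        fun y h => hvS (h ▸ y.2)
      have ψ : (G'.induce ((f S : Set (Fin n)))) ≃g (G.induce (S : Set (Fin (n + 1)))) := by
        refine ⟨⟨fun x => ⟨g x.1, ?_⟩, fun y => ⟨e ⟨y.1, hyne y⟩, ?_⟩, ?_, ?_⟩, ?_⟩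
        · have := x.2
          simp only [hfdef, Finset.coe_filter, Set.mem_setOf_eq] at this
          exact this.2
        · show (e ⟨y.1, hyne y⟩ : Fin n) ∈ (f S : Set (Fin n))
          simp only [hfdef, Finset.coe_filter, Set.mem_setOf_eq]
          refine ⟨Finset.mem_univ _, ?_⟩
          rw [hgsurj _ (hyne y)]
          exact y.2
        · intro x
          apply Subtype.ext
          apply hginj
          exact hgsurj _ _
        · intro y
          apply Subtype.ext
          exact hgsurj _ _
        · intro a b
          rfl
      exact ⟨ψ.trans φ⟩
    · intro S hS S' hS' hff
      simp only [Finset.coe_filter, Set.mem_setOf_eq] at hS hS'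
      have hvS : v ∉ S := hS.2
      have hvS' : v ∉ S' := hS'.2
      rw [← himg S hvS, ← himg S' hvS', hff]
  -- combine
  calc (n + 1 - k) * maxInducedCount H (n + 1)
      = (n + 1 - k) * good.card := by rw [← hG, hcount]
    _ = ∑ v : Fin (n + 1), (good.filter (fun S => v ∉ S)).card := hsum.symm
    _ ≤ ∑ _v : Fin (n + 1), maxInducedCount H n := Finset.sum_le_sum (fun v _ => hv v)
    _ = (n + 1) * maxInducedCount H n := by
        rw [Finset.sum_const, Finset.card_univ, Fintype.card_fin, smul_eq_mul]

end Aux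

/-- For every graph `H` on `k ≥ 1` vertices, the sequence
`n ↦ P(H,n)/C(n,k)` converges to some limit `L ∈ [0,1]` (the inducibility of `H`). -/
theorem inducibility_exists {α : Type*} [Fintype α] (H : SimpleGraph α)
    (hk : 1 ≤ Fintype.card α) :
    ∃ L : ℝ, 0 ≤ L ∧ L ≤ 1 ∧
      Filter.Tendsto (fun n : ℕ => (maxInducedCount H n : ℝ) / (n.choose (Fintype.card α) : ℝ))
        Filter.atTop (nhds L) := by
  classical
  set k := Fintype.card α with hkdef
  set f : ℕ → ℝ := fun n => (maxInducedCount H n : ℝ) / (n.choose k : ℝ) with hf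
  have hpos : ∀ n, 0 ≤ f n := fun n => by
    rw [hf]; positivity
  have hbound : ∀ n, k ≤ n → f n ≤ 1 := by
    intro n hn
    rw [hf]
    apply div_le_one_of_le₀
    · exact_mod_cast maxInducedCount_le H n
    · positivity
  have hstep : ∀ n, k ≤ n → f (n + 1) ≤ f n := by
    intro n hn
    have h1 : 0 < (n.choose k : ℝ) := by exact_mod_cast Nat.choose_pos hn
    have h2 : 0 < ((n + 1).choose k : ℝ) := by
      exact_mod_cast Nat.choose_pos (hn.trans (Nat.le_succ n))
    rw [hf]
    rw [div_le_div_iff₀ h2 h1]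
    have hkey := key_ineq H hn
    have hnat : maxInducedCount H (n + 1) * n.choose k
        ≤ maxInducedCount H n * (n + 1).choose k := by
      have hpos' : 0 < n + 1 - k := by omega
      apply Nat.le_of_mul_le_mul_left _ hpos'
      calc (n + 1 - k) * (maxInducedCount H (n + 1) * n.choose k)
          = ((n + 1 - k) * maxInducedCount H (n + 1)) * n.choose k := by ring
        _ ≤ ((n + 1) * maxInducedCount H n) * n.choose k :=
            Nat.mul_le_mul_right _ hkey
        _ = maxInducedCount H n * (n.choose k * (n + 1)) := by ring
        _ = maxInducedCount H n * ((n + 1).choose k * (n + 1 - k)) := by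
            rw [Nat.choose_mul_succ_eq]
        _ = (n + 1 - k) * (maxInducedCount H n * (n + 1).choose k) := by ring
    exact_mod_cast hnat
  set b : ℕ → ℝ := fun m => f (m + k) with hb
  have hanti : Antitone b := antitone_nat_of_succ_le fun m => by
    have := hstep (m + k) (Nat.le_add_left _ _)
    simpa [hb, add_right_comm] using this
  have hbdd : BddBelow (Set.range b) := by
    refine ⟨0, fun x hx => ?_⟩
    obtain ⟨m, rfl⟩ := hx
    exact hpos _
  have hlim : Filter.Tendsto b Filter.atTop (nhds (⨅ m, b m)) :=
    tendsto_atTop_ciInf hanti hbdd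
  refine ⟨⨅ m, b m, ?_, ?_, ?_⟩
  · exact le_ciInf fun m => hpos _
  · refine le_trans (ciInf_le hbdd 0) ?_
    have : b 0 = f k := by rw [hb]; norm_num
    rw [this]
    exact hbound k le_rfl
  · have h1 : Filter.Tendsto (fun n : ℕ => b (n - k)) Filter.atTop (nhds (⨅ m, b m)) :=
      hlim.comp (Filter.tendsto_sub_atTop_nat k)
    refine h1.congr' ?_
    filter_upwards [Filter.eventually_ge_atTop k] with n hn
    rw [hb, hf]
    simp only [Nat.sub_add_cancel hn]
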